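/- Let A, B be positive definite matrices on a finite-dimensional Hilbert space with m·I ≤ A ≤ M·I and m·I ≤ B ≤ M·I for scalars 0 < m ≤ M, and let 0 ≤ t ≤ 1. Then for every unit vector x, ⟨(A♮_t B)x, x⟩ ≤ ((M^{1+t}+m^{1+t})²/(4 M^{1+t} m^{1+t})) · ⟨Ax,x⟩^{1-t} ⟨Bx,x⟩^t. -/

import Mathlib

open Matrix

variable {n : Type*} [Fintype n] [DecidableEq n]

/-- Real power of a matrix, defined via the spectral decomposition for Hermitian matrices. -/
noncomputable def mpow (A : Matrix n n ℝ) (t : ℝ) : Matrix n n ℝ :=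
  if hA : A.IsHermitian then
    (hA.eigenvectorUnitary : Matrix n n ℝ) * Matrix.diagonal (fun i => hA.eigenvalues i ^ t) *
      star (hA.eigenvectorUnitary : Matrix n n ℝ)
  else A

/-- The weighted geometric mean `A ♯ₜ B = A^{1/2} (A^{-1/2} B A^{-1/2})^t A^{1/2}`. -/
noncomputable def gmean (t : ℝ) (A B : Matrix n n ℝ) : Matrix n n ℝ :=
  mpow A (1/2) * mpow (mpow A (-(1/2)) * B * mpow A (-(1/2))) t * mpow A (1/2)

/-- The weighted spectral geometric mean `A ♮ₜ B = (A⁻¹ ♯ B)^t A (A⁻¹ ♯ B)^t`. -/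
noncomputable def smean (t : ℝ) (A B : Matrix n n ℝ) : Matrix n n ℝ :=
  mpow (gmean (1/2) A⁻¹ B) t * A * mpow (gmean (1/2) A⁻¹ B) t

lemma mpow_eq {A : Matrix n n ℝ} (hA : A.IsHermitian) (s : ℝ) :
    mpow A s = (hA.eigenvectorUnitary : Matrix n n ℝ) *
      Matrix.diagonal (fun i => hA.eigenvalues i ^ s) *
      star (hA.eigenvectorUnitary : Matrix n n ℝ) := dif_pos hA

lemma eigU_mul_star {A : Matrix n n ℝ} (hA : A.IsHermitian) :
    (hA.eigenvectorUnitary : Matrix n n ℝ) * star (hA.eigenvectorUnitary : Matrix n n ℝ) = 1 :=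
  (Matrix.mem_unitaryGroup_iff).mp (hA.eigenvectorUnitary).2

lemma star_mul_eigU {A : Matrix n n ℝ} (hA : A.IsHermitian) :
    star (hA.eigenvectorUnitary : Matrix n n ℝ) * (hA.eigenvectorUnitary : Matrix n n ℝ) = 1 :=
  (Matrix.mem_unitaryGroup_iff').mp (hA.eigenvectorUnitary).2

lemma spectral_real {A : Matrix n n ℝ} (hA : A.IsHermitian) :
    A = (hA.eigenvectorUnitary : Matrix n n ℝ) * Matrix.diagonal hA.eigenvalues *
      star (hA.eigenvectorUnitary : Matrix n n ℝ) := by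
  have := hA.spectral_theorem
  simpa using this


lemma starU_eq (U : Matrix n n ℝ) : star U = Uᵀ := by
  rw [Matrix.star_eq_conjTranspose, Matrix.conjTranspose_eq_transpose_of_trivial]

lemma star_vec (x : n → ℝ) : star x = x := star_trivial x

lemma dot_shift (P : Matrix n n ℝ) (x z : n → ℝ) : x ⬝ᵥ (P *ᵥ z) = (Pᵀ *ᵥ x) ⬝ᵥ z := by
  rw [Matrix.dotProduct_mulVec, Matrix.mulVec_transpose]

lemma dot_conj_diag (U : Matrix n n ℝ) (d : n → ℝ) (x : n → ℝ) :
    x ⬝ᵥ ((U * Matrix.diagonal d * star U) *ᵥ x) = ∑ i, d i * ((star U *ᵥ x) i)^2 := by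
  rw [← Matrix.mulVec_mulVec, ← Matrix.mulVec_mulVec, dot_shift, starU_eq]
  generalize (Uᵀ *ᵥ x) = w
  simp only [dotProduct, Matrix.mulVec_diagonal]
  exact Finset.sum_congr rfl fun i _ => by ring

lemma mpow_mul_mpow {A : Matrix n n ℝ} (hA : A.PosDef) (s r : ℝ) :
    mpow A s * mpow A r = mpow A (s + r) := by
  rw [mpow_eq hA.1, mpow_eq hA.1, mpow_eq hA.1]
  set U := (hA.1.eigenvectorUnitary : Matrix n n ℝ)
  have h1 : star U * U = 1 := star_mul_eigU hA.1
  have hd : (Matrix.diagonal fun i => hA.1.eigenvalues i ^ s) *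
      (Matrix.diagonal fun i => hA.1.eigenvalues i ^ r)
      = Matrix.diagonal fun i => hA.1.eigenvalues i ^ (s + r) := by
    rw [Matrix.diagonal_mul_diagonal]
    exact congrArg Matrix.diagonal
      (funext fun i => (Real.rpow_add (hA.eigenvalues_pos i) s r).symm)
  calc (U * Matrix.diagonal (fun i => hA.1.eigenvalues i ^ s) * star U) *
      (U * Matrix.diagonal (fun i => hA.1.eigenvalues i ^ r) * star U)
      = U * (Matrix.diagonal (fun i => hA.1.eigenvalues i ^ s) * (star U * U) *
        Matrix.diagonal (fun i => hA.1.eigenvalues i ^ r)) * star U := by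
        simp only [Matrix.mul_assoc]
    _ = U * (Matrix.diagonal fun i => hA.1.eigenvalues i ^ (s + r)) * star U := by
        rw [h1, Matrix.mul_one, hd]

lemma mpow_zero {A : Matrix n n ℝ} (hA : A.IsHermitian) : mpow A 0 = 1 := by
  rw [mpow_eq hA]
  simp only [Real.rpow_zero]
  rw [Matrix.diagonal_one, Matrix.mul_one, eigU_mul_star hA]

lemma mpow_one {A : Matrix n n ℝ} (hA : A.IsHermitian) : mpow A 1 = A := by
  rw [mpow_eq hA]
  simp only [Real.rpow_one]
  exact (spectral_real hA).symm

lemma mpow_isHermitian {A : Matrix n n ℝ} (hA : A.IsHermitian) (s : ℝ) :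
    (mpow A s).IsHermitian := by
  rw [mpow_eq hA]
  set U := (hA.eigenvectorUnitary : Matrix n n ℝ)
  unfold Matrix.IsHermitian
  rw [Matrix.conjTranspose_mul, Matrix.conjTranspose_mul]
  rw [show (Matrix.diagonal fun i => hA.eigenvalues i ^ s)ᴴ
      = Matrix.diagonal fun i => hA.eigenvalues i ^ s by
    rw [Matrix.diagonal_conjTranspose]; simp]
  rw [← Matrix.star_eq_conjTranspose, ← Matrix.star_eq_conjTranspose, star_star,
    Matrix.mul_assoc]

lemma dot_mpow {A : Matrix n n ℝ} (hA : A.IsHermitian) (s : ℝ) (x : n → ℝ) :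
    x ⬝ᵥ (mpow A s *ᵥ x) = ∑ i, hA.eigenvalues i ^ s *
      ((star (hA.eigenvectorUnitary : Matrix n n ℝ) *ᵥ x) i)^2 := by
  rw [mpow_eq hA, dot_conj_diag]

lemma mpow_posDef {A : Matrix n n ℝ} (hA : A.PosDef) (s : ℝ) : (mpow A s).PosDef := by
  refine Matrix.PosDef.of_dotProduct_mulVec_pos (mpow_isHermitian hA.1 s) fun x hx => ?_
  rw [_root_.star_vec, dot_mpow hA.1 s x]
  set U := (hA.1.eigenvectorUnitary : Matrix n n ℝ)
  have hUx : star U *ᵥ x ≠ 0 := by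
    intro h
    apply hx
    have := congrArg (fun v => U *ᵥ v) h
    simpa [Matrix.mulVec_mulVec, show U * star U = 1 from eigU_mul_star hA.1] using this
  obtain ⟨j, hj⟩ := Function.ne_iff.mp hUx
  refine Finset.sum_pos' (fun i _ => ?_) ⟨j, Finset.mem_univ j, ?_⟩
  · exact mul_nonneg (Real.rpow_pos_of_pos (hA.eigenvalues_pos i) s).le (sq_nonneg _)
  · have h1 : 0 < ((star U *ᵥ x) j)^2 :=
      lt_of_le_of_ne (sq_nonneg _) (Ne.symm (pow_ne_zero 2 hj))
    exact mul_pos (Real.rpow_pos_of_pos (hA.eigenvalues_pos j) s) h1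

lemma smul_one_diag (c : ℝ) : c • (1 : Matrix n n ℝ) = Matrix.diagonal (fun _ => c) := by
  ext i j
  rcases eq_or_ne i j with h | h
  · simp [h]
  · simp [h, Matrix.one_apply_ne h]

lemma conj_eigU {A : Matrix n n ℝ} (hA : A.IsHermitian) :
    star (hA.eigenvectorUnitary : Matrix n n ℝ) * A * (hA.eigenvectorUnitary : Matrix n n ℝ)
      = Matrix.diagonal hA.eigenvalues := by
  have := hA.conjStarAlgAut_star_eigenvectorUnitary
  simpa using this

lemma eig_le {A : Matrix n n ℝ} (hA : A.IsHermitian) {M : ℝ}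
    (hAM : (M • (1 : Matrix n n ℝ) - A).PosSemidef) (i : n) : hA.eigenvalues i ≤ M := by
  set U := (hA.eigenvectorUnitary : Matrix n n ℝ)
  have h := hAM.conjTranspose_mul_mul_same U
  have heq : Uᴴ * (M • (1 : Matrix n n ℝ) - A) * U
      = Matrix.diagonal (fun j => M - hA.eigenvalues j) := by
    rw [mul_sub, sub_mul, ← Matrix.star_eq_conjTranspose]
    rw [mul_smul_comm, smul_mul_assoc, Matrix.mul_one, star_mul_eigU hA, conj_eigU hA]
    rw [smul_one_diag, Matrix.diagonal_sub]
  rw [heq] at h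
  have := Matrix.posSemidef_diagonal_iff.mp h i
  linarith

lemma eig_ge {A : Matrix n n ℝ} (hA : A.IsHermitian) {m : ℝ}
    (hmA : (A - m • (1 : Matrix n n ℝ)).PosSemidef) (i : n) : m ≤ hA.eigenvalues i := by
  set U := (hA.eigenvectorUnitary : Matrix n n ℝ)
  have h := hmA.conjTranspose_mul_mul_same U
  have heq : Uᴴ * (A - m • (1 : Matrix n n ℝ)) * U
      = Matrix.diagonal (fun j => hA.eigenvalues j - m) := by
    rw [mul_sub, sub_mul, ← Matrix.star_eq_conjTranspose]
    rw [mul_smul_comm, smul_mul_assoc, Matrix.mul_one, star_mul_eigU hA, conj_eigU hA]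
    rw [smul_one_diag, Matrix.diagonal_sub]
  rw [heq] at h
  have := Matrix.posSemidef_diagonal_iff.mp h i
  linarith

lemma inv_spectral {A : Matrix n n ℝ} (hA : A.PosDef) :
    A⁻¹ = (hA.1.eigenvectorUnitary : Matrix n n ℝ) *
      Matrix.diagonal (fun i => (hA.1.eigenvalues i)⁻¹) *
      star (hA.1.eigenvectorUnitary : Matrix n n ℝ) := by
  apply inv_eq_right_inv
  set U := (hA.1.eigenvectorUnitary : Matrix n n ℝ)
  calc A * (U * Matrix.diagonal (fun i => (hA.1.eigenvalues i)⁻¹) * star U)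
      = (U * Matrix.diagonal hA.1.eigenvalues * star U) *
        (U * Matrix.diagonal (fun i => (hA.1.eigenvalues i)⁻¹) * star U) := by
        rw [← spectral_real hA.1]
    _ = U * (Matrix.diagonal hA.1.eigenvalues * (star U * U) *
        Matrix.diagonal (fun i => (hA.1.eigenvalues i)⁻¹)) * star U := by
        simp only [Matrix.mul_assoc]
    _ = 1 := by
        rw [star_mul_eigU hA.1, Matrix.mul_one, Matrix.diagonal_mul_diagonal]
        have : (fun i => hA.1.eigenvalues i * (hA.1.eigenvalues i)⁻¹) = fun _ => (1:ℝ) :=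
          funext fun i => mul_inv_cancel₀ (hA.eigenvalues_pos i).ne'
        rw [this, Matrix.diagonal_one, Matrix.mul_one, eigU_mul_star hA.1]

lemma dot_self_eq {A : Matrix n n ℝ} (hA : A.IsHermitian) (y : n → ℝ) :
    y ⬝ᵥ y = ∑ i, ((star (hA.eigenvectorUnitary : Matrix n n ℝ) *ᵥ y) i)^2 := by
  set U := (hA.eigenvectorUnitary : Matrix n n ℝ)
  have h1 : (star U *ᵥ y) ⬝ᵥ (star U *ᵥ y) = y ⬝ᵥ y := by
    rw [dot_shift, Matrix.mulVec_mulVec]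
    rw [show (star U)ᵀ = U by rw [starU_eq, Matrix.transpose_transpose]]
    rw [eigU_mul_star hA, Matrix.one_mulVec]
  rw [← h1]
  simp only [dotProduct, sq]

lemma kantorovich {A : Matrix n n ℝ} {m M : ℝ} (hA : A.PosDef)
    (hmA : (A - m • (1 : Matrix n n ℝ)).PosSemidef)
    (hAM : (M • (1 : Matrix n n ℝ) - A).PosSemidef)
    (hm : 0 < m) (hmM : m ≤ M) (y : n → ℝ) :
    (y ⬝ᵥ (A *ᵥ y)) * (y ⬝ᵥ (A⁻¹ *ᵥ y)) * (4*M*m) ≤ (M+m)^2 * (y ⬝ᵥ y)^2 := by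
  have hM : 0 < M := lt_of_lt_of_le hm hmM
  set U := (hA.1.eigenvectorUnitary : Matrix n n ℝ)
  set d := hA.1.eigenvalues with hd
  set w := star U *ᵥ y with hw
  have hqA : y ⬝ᵥ (A *ᵥ y) = ∑ i, d i * (w i)^2 := by
    have := dot_conj_diag U d y
    rw [← spectral_real hA.1] at this
    exact this
  have hqinv : y ⬝ᵥ (A⁻¹ *ᵥ y) = ∑ i, (d i)⁻¹ * (w i)^2 := by
    have := dot_conj_diag U (fun i => (d i)⁻¹) y
    rw [← inv_spectral hA] at this
    exact this
  have hqI : y ⬝ᵥ y = ∑ i, (w i)^2 := dot_self_eq hA.1 y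
  have hsum : (∑ i, d i * (w i)^2) + M*m*(∑ i, (d i)⁻¹ * (w i)^2)
      ≤ (M+m) * ∑ i, (w i)^2 := by
    rw [Finset.mul_sum, Finset.mul_sum, ← Finset.sum_add_distrib]
    refine Finset.sum_le_sum fun i _ => ?_
    have hdi : 0 < d i := hA.eigenvalues_pos i
    have hgm : m ≤ d i := eig_ge hA.1 hmA i
    have hgM : d i ≤ M := eig_le hA.1 hAM i
    have h1 : d i + M*m*(d i)⁻¹ ≤ M + m := by
      have h2 : 0 ≤ (M - d i) * (d i - m) := mul_nonneg (by linarith) (by linarith)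
      rw [show M*m*(d i)⁻¹ = M*m/(d i) by ring, ← sub_nonneg]
      have h4 : M + m - (d i + M*m/(d i)) = (M - d i)*(d i - m)/(d i) := by
        field_simp
        ring
      rw [h4]
      exact div_nonneg h2 hdi.le
    calc d i * (w i)^2 + M*m*((d i)⁻¹ * (w i)^2) = (d i + M*m*(d i)⁻¹) * (w i)^2 := by ring
      _ ≤ (M+m) * (w i)^2 := mul_le_mul_of_nonneg_right h1 (sq_nonneg _)
  have hqAnn : 0 ≤ ∑ i, d i * (w i)^2 :=
    Finset.sum_nonneg fun i _ => mul_nonneg (hA.eigenvalues_pos i).le (sq_nonneg _)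
  have hqinvnn : 0 ≤ ∑ i, (d i)⁻¹ * (w i)^2 :=
    Finset.sum_nonneg fun i _ => mul_nonneg (inv_nonneg.mpr (hA.eigenvalues_pos i).le) (sq_nonneg _)
  rw [hqA, hqinv, hqI]
  set X := ∑ i, d i * (w i)^2
  set Y := ∑ i, (d i)⁻¹ * (w i)^2
  set Z := ∑ i, (w i)^2
  have hS : 0 ≤ X + M*m*Y := add_nonneg hqAnn (mul_nonneg (by positivity) hqinvnn)
  have hZ : 0 ≤ (M+m)*Z := le_trans hS hsum
  nlinarith [sq_nonneg (X - M*m*Y), mul_le_mul hsum hsum hS hZ]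

lemma dot_symm {A : Matrix n n ℝ} (hA : A.IsHermitian) (u v : n → ℝ) :
    u ⬝ᵥ (A *ᵥ v) = (A *ᵥ u) ⬝ᵥ v := by
  rw [dot_shift]
  congr 1
  rw [show Aᵀ = A by rw [← Matrix.conjTranspose_eq_transpose_of_trivial]; exact hA]

lemma cs_ineq {A : Matrix n n ℝ} (hA : A.PosDef) (y z : n → ℝ) :
    (y ⬝ᵥ z)^2 ≤ (y ⬝ᵥ (A⁻¹ *ᵥ y)) * (z ⬝ᵥ (A *ᵥ z)) := by
  have hAA : A * A⁻¹ = 1 := Matrix.mul_nonsing_inv A hA.det_pos.ne'.isUnit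
  have hq : ∀ s : ℝ, 0 ≤ (y ⬝ᵥ (A⁻¹ *ᵥ y)) * (s * s) + (-(2 * (y ⬝ᵥ z))) * s
      + (z ⬝ᵥ (A *ᵥ z)) := by
    intro s
    have h0 := hA.posSemidef.dotProduct_mulVec_nonneg (z - s • (A⁻¹ *ᵥ y))
    rw [_root_.star_vec] at h0
    have hexp : (z - s • (A⁻¹ *ᵥ y)) ⬝ᵥ (A *ᵥ (z - s • (A⁻¹ *ᵥ y)))
        = (y ⬝ᵥ (A⁻¹ *ᵥ y)) * (s * s) + (-(2 * (y ⬝ᵥ z))) * s + (z ⬝ᵥ (A *ᵥ z)) := by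
      have hAv : A *ᵥ (A⁻¹ *ᵥ y) = y := by
        rw [Matrix.mulVec_mulVec, hAA, Matrix.one_mulVec]
      rw [Matrix.mulVec_sub, Matrix.mulVec_smul, hAv]
      rw [sub_dotProduct, smul_dotProduct]
      rw [dotProduct_sub, dotProduct_sub]
      rw [dotProduct_smul, dotProduct_smul]
      have h1 : (A⁻¹ *ᵥ y) ⬝ᵥ (A *ᵥ z) = y ⬝ᵥ z := by
        rw [dot_symm hA.1, hAv]
      have h2 : (A⁻¹ *ᵥ y) ⬝ᵥ y = y ⬝ᵥ (A⁻¹ *ᵥ y) := dotProduct_comm _ _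
      have h3 : z ⬝ᵥ y = y ⬝ᵥ z := dotProduct_comm _ _
      rw [h1, h2, h3]
      simp only [smul_eq_mul]
      ring
    rw [hexp] at h0
    exact h0
  have hd := discrim_le_zero hq
  rw [discrim] at hd
  nlinarith [hd]

lemma holder_sum {ι : Type*} [Fintype ι] {t : ℝ} (ht0 : 0 ≤ t) (ht1 : t ≤ 1)
    (μ ν : ι → ℝ) (hμ : ∀ i, 0 < μ i) (hν : ∀ i, 0 ≤ ν i) :
    ∑ i, μ i ^ (2*t) * ν i ≤
      (∑ i, μ i ^ t * ν i) ^ (1-t) * (∑ i, μ i ^ (t+1) * ν i) ^ t := by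
  rcases eq_or_lt_of_le ht0 with h0 | h0
  · rw [← h0]
    norm_num
  rcases eq_or_lt_of_le ht1 with h1 | h1
  · rw [h1]
    norm_num
  set p := (1-t)⁻¹ with hp
  set q := t⁻¹ with hq
  have h1t : 0 < 1 - t := by linarith
  have hpq : Real.HolderConjugate p q := by
    rw [Real.holderConjugate_iff]
    constructor
    · rw [hp]
      rw [lt_inv_comm₀ one_pos h1t]
      linarith
    · rw [hp, hq, inv_inv, inv_inv]
      ring
  have key := Real.inner_le_Lp_mul_Lq Finset.univ
    (fun i => (μ i ^ t * ν i) ^ (1-t)) (fun i => (μ i ^ (t+1) * ν i) ^ t) hpq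
  have e1 : ∀ i : ι, (μ i ^ t * ν i) ^ (1-t) * (μ i ^ (t+1) * ν i) ^ t
      = μ i ^ (2*t) * ν i := by
    intro i
    rcases eq_or_lt_of_le (hν i) with hz | hz
    · rw [← hz, mul_zero, mul_zero, Real.zero_rpow h1t.ne', zero_mul, mul_zero]
    · rw [Real.mul_rpow (Real.rpow_nonneg (hμ i).le _) hz.le,
        Real.mul_rpow (Real.rpow_nonneg (hμ i).le _) hz.le,
        ← Real.rpow_mul (hμ i).le, ← Real.rpow_mul (hμ i).le,
        mul_mul_mul_comm, ← Real.rpow_add (hμ i), ← Real.rpow_add hz]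
      rw [show t*(1-t) + (t+1)*t = 2*t by ring, show 1 - t + t = (1:ℝ) by ring,
        Real.rpow_one]
  have e2 : ∀ i : ι, |(μ i ^ t * ν i) ^ (1-t)| ^ p = μ i ^ t * ν i := by
    intro i
    have hnn : (0:ℝ) ≤ μ i ^ t * ν i := mul_nonneg (Real.rpow_nonneg (hμ i).le _) (hν i)
    rw [abs_of_nonneg (Real.rpow_nonneg hnn _), hp, Real.rpow_rpow_inv hnn h1t.ne']
  have e3 : ∀ i : ι, |(μ i ^ (t+1) * ν i) ^ t| ^ q = μ i ^ (t+1) * ν i := by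
    intro i
    have hnn : (0:ℝ) ≤ μ i ^ (t+1) * ν i := mul_nonneg (Real.rpow_nonneg (hμ i).le _) (hν i)
    rw [abs_of_nonneg (Real.rpow_nonneg hnn _), hq, Real.rpow_rpow_inv hnn h0.ne']
  simp only [e1, e2, e3] at key
  rw [hp, hq, one_div, one_div, inv_inv, inv_inv] at key
  exact key

lemma posdef_conj {B P : Matrix n n ℝ} (hB : B.PosDef) (hP : P.PosDef) :
    (P * B * P).PosDef := by
  refine Matrix.PosDef.of_dotProduct_mulVec_pos ?_ fun v hv => ?_
  · unfold Matrix.IsHermitian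
    rw [Matrix.conjTranspose_mul, Matrix.conjTranspose_mul, hB.1, hP.1, Matrix.mul_assoc]
  · have hPv : P *ᵥ v ≠ 0 := by
      intro h
      apply hv
      have := congrArg (fun u => P⁻¹ *ᵥ u) h
      simpa [Matrix.mulVec_mulVec, Matrix.nonsing_inv_mul P hP.det_pos.ne'.isUnit] using this
    have := hB.dotProduct_mulVec_pos hPv
    rw [_root_.star_vec] at this ⊢
    rw [← Matrix.mulVec_mulVec, ← Matrix.mulVec_mulVec, dot_symm hP.1]
    exact this

lemma const_le {t m M : ℝ} (ht0 : 0 ≤ t) (hm : 0 < m) (hmM : m ≤ M) :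
    (M+m)^2/(4*M*m) ≤ (M^(1+t)+m^(1+t))^2/(4*M^(1+t)*m^(1+t)) := by
  have hM : 0 < M := lt_of_lt_of_le hm hmM
  set u := M^(t/2) with hu
  set v := m^(t/2) with hv
  have hu0 : 0 < u := Real.rpow_pos_of_pos hM _
  have hv0 : 0 < v := Real.rpow_pos_of_pos hm _
  have huv : v ≤ u := Real.rpow_le_rpow hm.le hmM (by linarith)
  have hMt : M ^ (1+t) = M * u^2 := by
    rw [Real.rpow_add hM, Real.rpow_one, hu, ← Real.rpow_natCast (M^(t/2)) 2,
      ← Real.rpow_mul hM.le]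
    norm_num
  have hmt : m ^ (1+t) = m * v^2 := by
    rw [Real.rpow_add hm, Real.rpow_one, hv, ← Real.rpow_natCast (m^(t/2)) 2,
      ← Real.rpow_mul hm.le]
    norm_num
  rw [hMt, hmt, div_le_div_iff₀ (by positivity) (by positivity)]
  have h2 : 0 ≤ (u - v) * (M*u - m*v) := by
    apply mul_nonneg (by linarith)
    nlinarith
  have h3 : (M+m)*(u*v) ≤ M*u^2 + m*v^2 := by nlinarith
  have h4 : ((M+m)*(u*v))^2 ≤ (M*u^2 + m*v^2)^2 := by
    apply pow_le_pow_left₀ (by positivity) h3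
  nlinarith [h4, mul_pos hM hm]

theorem smean_inner_bound (t m M : ℝ) (ht0 : 0 ≤ t) (ht1 : t ≤ 1)
    (hm : 0 < m) (hmM : m ≤ M)
    (A B : Matrix n n ℝ) (hA : A.PosDef) (hB : B.PosDef)
    (hmA : (A - m • (1 : Matrix n n ℝ)).PosSemidef)
    (hAM : (M • (1 : Matrix n n ℝ) - A).PosSemidef)
    (hmB : (B - m • (1 : Matrix n n ℝ)).PosSemidef)
    (hBM : (M • (1 : Matrix n n ℝ) - B).PosSemidef)
    (x : n → ℝ) (hx : x ⬝ᵥ x = 1) :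
    x ⬝ᵥ (smean t A B *ᵥ x) ≤
      ((M ^ (1 + t) + m ^ (1 + t)) ^ 2 / (4 * M ^ (1 + t) * m ^ (1 + t))) *
        (x ⬝ᵥ (A *ᵥ x)) ^ (1 - t) * (x ⬝ᵥ (B *ᵥ x)) ^ t := by
  have hx0 : x ≠ 0 := fun h => by rw [h] at hx; simp at hx
  have hM0 : 0 < M := lt_of_lt_of_le hm hmM
  have hAinv : A⁻¹.PosDef := hA.inv
  set R := mpow A⁻¹ (1/2 : ℝ) with hRdef
  set R' := mpow A⁻¹ (-(1/2) : ℝ) with hR'def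
  have hRpd : R.PosDef := mpow_posDef hAinv _
  have hR'pd : R'.PosDef := mpow_posDef hAinv _
  have hRR' : R * R' = 1 := by
    rw [hRdef, hR'def, mpow_mul_mpow hAinv, show (1/2 + -(1/2) : ℝ) = 0 by norm_num,
      mpow_zero hAinv.1]
  have hR'R : R' * R = 1 := by
    rw [hRdef, hR'def, mpow_mul_mpow hAinv, show (-(1/2) + 1/2 : ℝ) = 0 by norm_num,
      mpow_zero hAinv.1]
  set Z := R' * B * R' with hZdef
  have hZpd : Z.PosDef := posdef_conj hB hR'pd
  set N := mpow Z (1/2 : ℝ) with hNdef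
  have hNpd : N.PosDef := mpow_posDef hZpd _
  set F := gmean (1/2) A⁻¹ B with hFdef
  have hFeq : F = R * N * R := rfl
  have hFpd : F.PosDef := by rw [hFeq]; exact posdef_conj hNpd hRpd
  have hFherm : F.IsHermitian := hFpd.1
  have hNN : N * N = Z := by
    rw [hNdef, mpow_mul_mpow hZpd, show (1/2 + 1/2 : ℝ) = 1 by norm_num, mpow_one hZpd.1]
  have hRAR : R * A * R = 1 := by
    have hRR : R * R = A⁻¹ := by
      rw [hRdef, mpow_mul_mpow hAinv, show (1/2 + 1/2 : ℝ) = 1 by norm_num, mpow_one hAinv.1]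
    have hAeq : A = R' * R' := by
      calc A = (A⁻¹)⁻¹ := (Matrix.nonsing_inv_nonsing_inv A hA.det_pos.ne'.isUnit).symm
        _ = (R * R)⁻¹ := by rw [hRR]
        _ = R⁻¹ * R⁻¹ := Matrix.mul_inv_rev R R
        _ = R' * R' := by rw [Matrix.inv_eq_right_inv hRR']
    rw [hAeq, show R * (R' * R') * R = (R * R') * (R' * R) by simp only [Matrix.mul_assoc],
      hRR', hR'R, one_mul]
  have hFAF : F * A * F = B := by
    rw [hFeq]
    calc (R*N*R) * A * (R*N*R) = R * N * (R * A * R) * N * R := by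
          simp only [Matrix.mul_assoc]
      _ = R * N * N * R := by rw [hRAR, Matrix.mul_one]
      _ = R * Z * R := by rw [Matrix.mul_assoc R N N, hNN]
      _ = B := by
          rw [hZdef, show R * (R' * B * R') * R = (R * R') * (B * (R' * R)) by
            simp only [Matrix.mul_assoc], hRR', hR'R, one_mul, Matrix.mul_one]
  set G := mpow F t with hGdef
  have hGpd : G.PosDef := mpow_posDef hFpd t
  have hGherm : G.IsHermitian := hGpd.1
  have hsm : smean t A B = G * A * G := rfl
  set y := G *ᵥ x with hy
  set a := x ⬝ᵥ (A *ᵥ x) with ha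
  set b := x ⬝ᵥ (B *ᵥ x) with hb
  set c1 := x ⬝ᵥ (G *ᵥ x) with hc1def
  set c2 := x ⬝ᵥ (mpow F (t+1) *ᵥ x) with hc2def
  set qI := x ⬝ᵥ (mpow F (2*t) *ᵥ x) with hqIdef
  set qA := y ⬝ᵥ (A *ᵥ y) with hqAdef
  set qinv := y ⬝ᵥ (A⁻¹ *ᵥ y) with hqinvdef
  -- basic identifications
  have hyy : y ⬝ᵥ y = qI := by
    rw [hy, ← dot_symm hGherm x (G *ᵥ x), Matrix.mulVec_mulVec, hGdef,
      mpow_mul_mpow hFpd, ← two_mul]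
  have hyx : y ⬝ᵥ x = c1 := by rw [hy, dotProduct_comm]
  have hyFx : y ⬝ᵥ (F *ᵥ x) = c2 := by
    rw [hy, ← dot_symm hGherm x (F *ᵥ x), Matrix.mulVec_mulVec, hGdef]
    rw [show mpow F t * F = mpow F t * mpow F 1 by rw [mpow_one hFherm],
      mpow_mul_mpow hFpd]
  have hFxAFx : (F *ᵥ x) ⬝ᵥ (A *ᵥ (F *ᵥ x)) = b := by
    rw [← dot_symm hFherm x (A *ᵥ (F *ᵥ x)), Matrix.mulVec_mulVec, Matrix.mulVec_mulVec,
      hFAF]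
  have hLHS : x ⬝ᵥ (smean t A B *ᵥ x) = qA := by
    rw [hsm, hqAdef, hy, ← Matrix.mulVec_mulVec, ← Matrix.mulVec_mulVec,
      dot_symm hGherm x (A *ᵥ (G *ᵥ x))]
  -- positivity
  have hc1 : 0 < c1 := by have := hGpd.dotProduct_mulVec_pos hx0; rwa [_root_.star_vec] at this
  have hc2 : 0 < c2 := by
    have := (mpow_posDef hFpd (t+1)).dotProduct_mulVec_pos hx0; rwa [_root_.star_vec] at this
  have hqI : 0 < qI := by
    have := (mpow_posDef hFpd (2*t)).dotProduct_mulVec_pos hx0; rwa [_root_.star_vec] at this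
  have ha0 : 0 < a := by have := hA.dotProduct_mulVec_pos hx0; rwa [_root_.star_vec] at this
  have hb0 : 0 < b := by have := hB.dotProduct_mulVec_pos hx0; rwa [_root_.star_vec] at this
  -- Hoelder
  have hH : qI ≤ c1 ^ (1-t) * c2 ^ t := by
    rw [hqIdef, hc1def, hc2def, hGdef, dot_mpow hFherm, dot_mpow hFherm, dot_mpow hFherm]
    exact holder_sum ht0 ht1 hFherm.eigenvalues _ (fun i => hFpd.eigenvalues_pos i)
      (fun i => sq_nonneg _)
  -- Cauchy-Schwarz
  have hcs1 : c1^2 ≤ qinv * a := by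
    have := cs_ineq hA y x
    rwa [hyx] at this
  have hcs2 : c2^2 ≤ qinv * b := by
    have := cs_ineq hA y (F *ᵥ x)
    rwa [hyFx, hFxAFx] at this
  have hqinv : 0 < qinv := by nlinarith [hcs1, hc1, ha0, sq_nonneg c1]
  -- Kantorovich
  have hk : qA * qinv * (4*M*m) ≤ (M+m)^2 * qI^2 := by
    have := kantorovich hA hmA hAM hm hmM y
    rwa [hyy] at this
  -- assemble (pure scalar reasoning from here on)
  rw [hLHS]
  clear_value a b c1 c2 qI qA qinv
  have h4Mm : (0:ℝ) < 4*M*m := mul_pos (mul_pos four_pos hM0) hm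
  have epow : ∀ (c s : ℝ), 0 < c → (c ^ s)^2 = (c^2) ^ s := by
    intro c s hc
    rw [← Real.rpow_natCast (c^s) 2, ← Real.rpow_mul hc.le, mul_comm,
      Real.rpow_mul hc.le, Real.rpow_natCast]
  have key1 : qI^2 ≤ (c1^2) ^ (1-t) * (c2^2) ^ t := by
    have hrhs : (0:ℝ) ≤ c1 ^ (1-t) * c2 ^ t :=
      mul_nonneg (Real.rpow_nonneg hc1.le _) (Real.rpow_nonneg hc2.le _)
    have h := mul_le_mul hH hH hqI.le hrhs
    calc qI^2 = qI * qI := pow_two qI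
      _ ≤ (c1 ^ (1-t) * c2 ^ t) * (c1 ^ (1-t) * c2 ^ t) := h
      _ = (c1 ^ (1-t))^2 * (c2 ^ t)^2 := by ring
      _ = (c1^2) ^ (1-t) * (c2^2) ^ t := by rw [epow c1 (1-t) hc1, epow c2 t hc2]
  have key2 : (c1^2) ^ (1-t) * (c2^2) ^ t ≤ (qinv*a) ^ (1-t) * (qinv*b) ^ t := by
    apply mul_le_mul
    · exact Real.rpow_le_rpow (sq_nonneg c1) hcs1 (by linarith)
    · exact Real.rpow_le_rpow (sq_nonneg c2) hcs2 ht0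
    · exact Real.rpow_nonneg (sq_nonneg c2) t
    · exact Real.rpow_nonneg (mul_nonneg hqinv.le ha0.le) _
  have key3 : (qinv*a) ^ (1-t) * (qinv*b) ^ t = qinv * (a ^ (1-t) * b ^ t) := by
    rw [Real.mul_rpow hqinv.le ha0.le, Real.mul_rpow hqinv.le hb0.le, mul_mul_mul_comm,
      ← Real.rpow_add hqinv, show 1 - t + t = (1:ℝ) by ring, Real.rpow_one]
  have chain : qA * qinv * (4*M*m) ≤ (M+m)^2 * (qinv * (a ^ (1-t) * b ^ t)) := by
    calc qA * qinv * (4*M*m) ≤ (M+m)^2 * qI^2 := hk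
      _ ≤ (M+m)^2 * ((c1^2) ^ (1-t) * (c2^2) ^ t) :=
          mul_le_mul_of_nonneg_left key1 (sq_nonneg (M+m))
      _ ≤ (M+m)^2 * ((qinv*a) ^ (1-t) * (qinv*b) ^ t) :=
          mul_le_mul_of_nonneg_left key2 (sq_nonneg (M+m))
      _ = (M+m)^2 * (qinv * (a ^ (1-t) * b ^ t)) := by rw [key3]
  have hcancel : qA * (4*M*m) ≤ (M+m)^2 * (a ^ (1-t) * b ^ t) := by
    have h2 : (qA * (4*M*m)) * qinv ≤ ((M+m)^2 * (a ^ (1-t) * b ^ t)) * qinv := by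
      calc (qA * (4*M*m)) * qinv = qA * qinv * (4*M*m) := by ring
        _ ≤ (M+m)^2 * (qinv * (a ^ (1-t) * b ^ t)) := chain
        _ = ((M+m)^2 * (a ^ (1-t) * b ^ t)) * qinv := by ring
    exact le_of_mul_le_mul_right h2 hqinv
  have hrho : 0 < a ^ (1-t) * b ^ t :=
    mul_pos (Real.rpow_pos_of_pos ha0 _) (Real.rpow_pos_of_pos hb0 _)
  have hstep : qA ≤ ((M+m)^2/(4*M*m)) * (a ^ (1-t) * b ^ t) := by
    rw [div_mul_eq_mul_div, le_div_iff₀ h4Mm]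
    linarith [hcancel]
  calc qA ≤ ((M+m)^2/(4*M*m)) * (a ^ (1-t) * b ^ t) := hstep
    _ ≤ ((M ^ (1 + t) + m ^ (1 + t)) ^ 2 / (4 * M ^ (1 + t) * m ^ (1 + t))) *
        (a ^ (1-t) * b ^ t) :=
      mul_le_mul_of_nonneg_right (const_le ht0 hm hmM) hrho.le
    _ = ((M ^ (1 + t) + m ^ (1 + t)) ^ 2 / (4 * M ^ (1 + t) * m ^ (1 + t))) *
        a ^ (1-t) * b ^ t := by ring
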